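/- Let β ∈ ℝ, γ > 0, and let μ, ν be compactly supported probability measures on ℝ with infinite support such that μ = Φ_{β,γ}[ν]. Then for every n ≥ 1, ∫ (P^μ_n)² dμ = γ ∫ (P^ν_{n−1})² dν. -/

import Mathlib

open MeasureTheory Polynomial

/-- Moments of a measure on ℝ. -/
noncomputable def mom (ρ : Measure ℝ) (k : ℕ) : ℝ := ∫ x, x ^ k ∂ρ

/-- A measure has compact support. -/
def CompactSupp (μ : Measure ℝ) : Prop := ∃ K : Set ℝ, IsCompact K ∧ μ Kᶜ = 0

/-- The (topological) support of a measure on ℝ. -/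
def msupport (μ : Measure ℝ) : Set ℝ := {x | ∀ U ∈ nhds x, μ U ≠ 0}

/-- `JacobiShift β γ mν mμ` says (at the level of moment sequences) that `μ = Φ_{β,γ}[ν]`. -/
def JacobiShift (β γ : ℝ) (mν mμ : ℕ → ℝ) : Prop :=
  ∀ n : ℕ, 1 ≤ n →
    mμ n = β * mμ (n - 1) + γ * ∑ i ∈ Finset.range (n - 1), mν i * mμ (n - 2 - i)

/-- `P` is the family of monic orthogonal polynomials of `ρ`. -/
def IsMonicOPS (ρ : Measure ℝ) (P : ℕ → Polynomial ℝ) : Prop :=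
  (∀ n, (P n).Monic) ∧ (∀ n, (P n).natDegree = n) ∧
  ∀ n m : ℕ, n ≠ m → ∫ x, (P n).eval x * (P m).eval x ∂ρ = 0

lemma integrable_eval {ρ : Measure ℝ} [IsFiniteMeasure ρ] (hcs : CompactSupp ρ)
    (p : Polynomial ℝ) : Integrable (fun x => p.eval x) ρ := by
  obtain ⟨K, hK, hKc⟩ := hcs
  obtain ⟨C, hC⟩ := hK.exists_bound_of_continuousOn p.continuous.continuousOn
  refine ⟨p.continuous.aestronglyMeasurable, HasFiniteIntegral.of_bounded (C := C) ?_⟩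
  refine (ae_iff.2 (measure_mono_null ?_ hKc))
  intro x hx
  simp only [Set.mem_setOf_eq] at hx
  exact fun hxK => hx (hC x hxK)

lemma integrable_eval_mul {ρ : Measure ℝ} [IsFiniteMeasure ρ] (hcs : CompactSupp ρ)
    (p q : Polynomial ℝ) : Integrable (fun x => p.eval x * q.eval x) ρ := by
  simpa using integrable_eval hcs (p * q)

lemma integrable_eval_mul_pow {ρ : Measure ℝ} [IsFiniteMeasure ρ] (hcs : CompactSupp ρ)
    (p : Polynomial ℝ) (m : ℕ) : Integrable (fun x => p.eval x * x ^ m) ρ := by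
  have := integrable_eval_mul hcs p (X ^ m)
  simp only [eval_pow, eval_X] at this
  exact this

lemma integrable_pow {ρ : Measure ℝ} [IsFiniteMeasure ρ] (hcs : CompactSupp ρ)
    (m : ℕ) : Integrable (fun x : ℝ => x ^ m) ρ := by
  have := integrable_eval hcs (X ^ m)
  simp only [eval_pow, eval_X] at this
  exact this

/-- Integral of a finite sum of monomials. -/
lemma integral_sum_pow {ρ : Measure ℝ} [IsFiniteMeasure ρ] (hcs : CompactSupp ρ)
    {α : Type*} (s : Finset α) (c : α → ℝ) (e : α → ℕ) :
    ∫ x, (∑ a ∈ s, c a * x ^ e a) ∂ρ = ∑ a ∈ s, c a * mom ρ (e a) := by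
  rw [integral_finset_sum s (fun a _ => ((integrable_pow hcs (e a)).const_mul (c a)))]
  exact Finset.sum_congr rfl fun a _ => integral_const_mul (c a) _

lemma integral_eval_mul_pow {ρ : Measure ℝ} [IsFiniteMeasure ρ] (hcs : CompactSupp ρ)
    (p : Polynomial ℝ) (m : ℕ) :
    ∫ x, p.eval x * x ^ m ∂ρ
      = ∑ k ∈ Finset.range (p.natDegree + 1), p.coeff k * mom ρ (k + m) := by
  have h : ∀ x : ℝ, p.eval x * x ^ m
      = ∑ k ∈ Finset.range (p.natDegree + 1), p.coeff k * x ^ (k + m) := by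
    intro x
    rw [eval_eq_sum_range, Finset.sum_mul]
    exact Finset.sum_congr rfl fun k _ => by rw [pow_add, mul_assoc]
  simp_rw [h]
  exact integral_sum_pow hcs _ _ _

lemma natDegree_lt_of_coeff {p : Polynomial ℝ} {n : ℕ} (h1 : p.natDegree ≤ n)
    (h2 : p.coeff n = 0) (h3 : 1 ≤ n) : p.natDegree < n := by
  by_cases hp : p = 0
  · simp only [hp, natDegree_zero]; omega
  · rcases lt_or_eq_of_le h1 with h | h
    · exact h
    · exfalso
      apply hp
      rw [← leadingCoeff_eq_zero, leadingCoeff, h, h2]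

/-- Orthogonality of `P n` against all polynomials of lower degree. -/
lemma orth_lower {ρ : Measure ℝ} [IsFiniteMeasure ρ] (hcs : CompactSupp ρ)
    {P : ℕ → Polynomial ℝ} (hP : IsMonicOPS ρ P) (n : ℕ) :
    ∀ (g : Polynomial ℝ), g.natDegree < n → ∫ x, (P n).eval x * g.eval x ∂ρ = 0 := by
  obtain ⟨hmon, hdeg, horth⟩ := hP
  suffices H : ∀ (m : ℕ) (g : Polynomial ℝ), g.natDegree = m → g.natDegree < n →
      ∫ x, (P n).eval x * g.eval x ∂ρ = 0 by
    exact fun g hg => H g.natDegree g rfl hg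
  intro m
  induction m using Nat.strong_induction_on with
  | _ m ih =>
    intro g hd hlt
    by_cases hg0 : g = 0
    · simp [hg0]
    set r : Polynomial ℝ := g - C g.leadingCoeff * P m with hr
    have hgd : g = C g.leadingCoeff * P m + r := by ring
    have hrc : r.coeff m = 0 := by
      have h1 : (P m).coeff m = 1 := by
        have := (hmon m).coeff_natDegree
        rwa [hdeg m] at this
      simp [hr, h1, leadingCoeff, hd]
    have hrd : r.natDegree ≤ m := by
      apply le_trans (natDegree_sub_le _ _)
      simp only [sup_le_iff]
      constructor
      · exact le_of_eq hd
      · exact le_trans (natDegree_mul_le) (by simp [hdeg m])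
    have hint : ∫ x, (P n).eval x * r.eval x ∂ρ = 0 := by
      by_cases hr0 : r = 0
      · simp [hr0]
      · have hrlt : r.natDegree < m := by
          rcases lt_or_eq_of_le hrd with h | h
          · exact h
          · exfalso; apply hr0; rw [← leadingCoeff_eq_zero, leadingCoeff, h, hrc]
        exact ih r.natDegree (hd ▸ hrlt) r rfl (by omega)
    calc ∫ x, (P n).eval x * g.eval x ∂ρ
        = ∫ x, (g.leadingCoeff * ((P n).eval x * (P m).eval x) + (P n).eval x * r.eval x) ∂ρ := by
          congr 1; funext x
          conv_lhs => rw [hgd]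
          simp; ring
      _ = g.leadingCoeff * ∫ x, (P n).eval x * (P m).eval x ∂ρ
            + ∫ x, (P n).eval x * r.eval x ∂ρ := by
          rw [integral_add (((integrable_eval_mul hcs (P n) (P m))).const_mul _)
            (integrable_eval_mul hcs (P n) r), integral_const_mul]
      _ = 0 := by rw [horth n m (by omega), hint]; ring

/-- `∫ (P k)^2 = ∫ (P k) x^k`. -/
lemma sq_eq_mul_pow {ρ : Measure ℝ} [IsFiniteMeasure ρ] (hcs : CompactSupp ρ)
    {P : ℕ → Polynomial ℝ} (hP : IsMonicOPS ρ P) (k : ℕ) :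
    ∫ x, ((P k).eval x) ^ 2 ∂ρ = ∫ x, (P k).eval x * x ^ k ∂ρ := by
  set r : Polynomial ℝ := P k - X ^ k with hr
  have hPk : ∀ x : ℝ, (P k).eval x = x ^ k + r.eval x := by
    intro x; simp [hr]
  have hint : ∫ x, (P k).eval x * r.eval x ∂ρ = 0 := by
    by_cases hr0 : r = 0
    · simp [hr0]
    · refine orth_lower hcs hP k r (natDegree_lt_of_coeff ?_ ?_ ?_)
      · apply le_trans (natDegree_sub_le _ _)
        simp [hP.2.1 k]
      · have h1 : (P k).coeff k = 1 := by
          have := (hP.1 k).coeff_natDegree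
          rwa [hP.2.1 k] at this
        simp [hr, h1]
      · by_contra hk
        push_neg at hk
        interval_cases k
        apply hr0
        have : P 0 = 1 := (hP.1 0).natDegree_eq_zero.mp (hP.2.1 0)
        simp [hr, this]
  calc ∫ x, ((P k).eval x) ^ 2 ∂ρ
      = ∫ x, ((P k).eval x * x ^ k + (P k).eval x * r.eval x) ∂ρ := by
        congr 1; funext x
        rw [pow_two]
        nth_rewrite 2 [hPk x]
        ring
    _ = ∫ x, (P k).eval x * x ^ k ∂ρ + ∫ x, (P k).eval x * r.eval x ∂ρ :=
        integral_add (integrable_eval_mul_pow hcs _ _) (integrable_eval_mul hcs _ _)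
    _ = _ := by rw [hint, add_zero]

/-- The index-shuffling identity. -/
lemma sum_shuffle (a b : ℕ → ℝ) (k m : ℕ) :
    ∑ i ∈ Finset.range (k + m), a i * b (k + m - 1 - i)
      - ∑ i ∈ Finset.range k, a (k - 1 - i) * b (i + m)
    = ∑ i ∈ Finset.range m, b i * a (k + m - 1 - i) := by
  have h2 : ∑ i ∈ Finset.range k, a (k - 1 - i) * b (i + m)
      = ∑ i ∈ Finset.range k, a i * b (k + m - 1 - i) := by
    rw [← Finset.sum_range_reflect (fun i => a i * b (k + m - 1 - i)) k]
    refine Finset.sum_congr rfl fun j hj => ?_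
    simp only [Finset.mem_range] at hj
    congr 1
    congr 1
    omega
  rw [h2, ← Finset.sum_Ico_eq_sub _ (Nat.le_add_right k m),
    Finset.sum_Ico_eq_sum_range]
  simp only [Nat.add_sub_cancel_left]
  rw [← Finset.sum_range_reflect (fun i => b i * a (k + m - 1 - i)) m]
  refine Finset.sum_congr rfl fun j hj => ?_
  simp only [Finset.mem_range] at hj
  rw [mul_comm]
  congr 1
  · congr 1; omega
  · congr 1; omega

theorem stmt17' (μ ν : Measure ℝ) [IsProbabilityMeasure μ] [IsProbabilityMeasure ν]
    (hcsμ : CompactSupp μ) (hcsν : CompactSupp ν)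
    (β : ℝ) (γ : ℝ) (hγ : 0 < γ)
    (hshift : ∀ n : ℕ, 1 ≤ n → mom μ n = β * mom μ (n - 1)
      + γ * ∑ i ∈ Finset.range (n - 1), mom ν i * mom μ (n - 2 - i))
    (Pμ Pν : ℕ → Polynomial ℝ) (hPμ : IsMonicOPS μ Pμ) (hPν : IsMonicOPS ν Pν) :
    ∀ n : ℕ, 1 ≤ n →
      ∫ x, ((Pμ n).eval x) ^ 2 ∂μ = γ * ∫ x, ((Pν (n - 1)).eval x) ^ 2 ∂ν := by
  intro n hn
  set f := Pν (n - 1) with hfdef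
  have hfm : f.Monic := hPν.1 _
  have hfd : f.natDegree = n - 1 := hPν.2.1 _
  set w : ℕ → ℝ := fun j => ∫ y, f.eval y * y ^ j ∂ν with hwdef
  have hw0 : ∀ j, j < n - 1 → w j = 0 := by
    intro j hj
    have h := orth_lower hcsν hPν (n-1) (X ^ j) (by simpa using hj)
    simp only [eval_pow, eval_X] at h
    exact h
  have hwval : ∀ j, w j = ∑ k ∈ Finset.range ((n-1) + 1), f.coeff k * mom ν (k + j) := by
    intro j
    rw [hwdef]
    simp only
    rw [integral_eval_mul_pow hcsν, hfd]
  set A : Polynomial ℝ := ∑ k ∈ Finset.range ((n-1)+1), C (f.coeff k) *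
      ∑ i ∈ Finset.range k, C (mom ν (k-1-i)) * X ^ i with hAdef
  set Q : Polynomial ℝ := (X - C β) * f - C γ * A with hQdef
  -- KEY identity
  have key : ∀ m : ℕ, ∫ x, Q.eval x * x ^ m ∂μ
      = γ * ∑ i ∈ Finset.range m, mom μ i * w (m - 1 - i) := by
    intro m
    have hAeval : ∀ x : ℝ, A.eval x * x ^ m
        = ∑ k ∈ Finset.range ((n-1)+1), f.coeff k *
            ∑ i ∈ Finset.range k, mom ν (k-1-i) * x ^ (i + m) := by
      intro x
      rw [hAdef]
      simp only [eval_finset_sum, eval_mul, eval_C, eval_pow, eval_X, Finset.sum_mul]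
      refine Finset.sum_congr rfl fun k _ => ?_
      rw [mul_assoc, Finset.sum_mul]
      congr 1
      refine Finset.sum_congr rfl fun i _ => ?_
      rw [pow_add]; ring
    have hint1 : Integrable (fun x => f.eval x * x ^ (m+1)) μ := integrable_eval_mul_pow hcsμ f (m+1)
    have hint2 : Integrable (fun x => f.eval x * x ^ m) μ := integrable_eval_mul_pow hcsμ f m
    have hintA : Integrable (fun x => A.eval x * x ^ m) μ := integrable_eval_mul_pow hcsμ A m
    have hsplit : ∀ x : ℝ, Q.eval x * x ^ m
        = (f.eval x * x ^ (m+1) - β * (f.eval x * x ^ m)) - γ * (A.eval x * x ^ m) := by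
      intro x
      rw [hQdef]
      simp only [eval_sub, eval_mul, eval_X, eval_C]
      ring
    have hIA : ∫ x, A.eval x * x ^ m ∂μ
        = ∑ k ∈ Finset.range ((n-1)+1), f.coeff k *
            ∑ i ∈ Finset.range k, mom ν (k-1-i) * mom μ (i+m) := by
      simp_rw [hAeval]
      rw [integral_finset_sum _ (fun k _ => Integrable.const_mul (integrable_finset_sum _
        (fun i _ => (integrable_pow hcsμ (i+m)).const_mul _)) _)]
      refine Finset.sum_congr rfl fun k _ => ?_
      rw [integral_const_mul, integral_sum_pow hcsμ]
    have hRHS : ∑ i ∈ Finset.range m, mom μ i * w (m - 1 - i)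
        = ∑ k ∈ Finset.range ((n-1)+1), f.coeff k *
            ∑ i ∈ Finset.range m, mom μ i * mom ν (k + m - 1 - i) := by
      simp_rw [hwval, Finset.mul_sum]
      rw [Finset.sum_comm]
      refine Finset.sum_congr rfl fun k _ => ?_
      refine Finset.sum_congr rfl fun i hi => ?_
      simp only [Finset.mem_range] at hi
      rw [show k + (m - 1 - i) = k + m - 1 - i by omega]
      ring
    have hint12 : Integrable (fun x => f.eval x * x ^ (m+1) - β * (f.eval x * x ^ m)) μ :=
      hint1.sub (hint2.const_mul β)
    simp_rw [hsplit]
    rw [integral_sub hint12 (hintA.const_mul γ),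
      integral_sub hint1 (hint2.const_mul β), integral_const_mul, integral_const_mul,
      integral_eval_mul_pow hcsμ f (m+1), integral_eval_mul_pow hcsμ f m, hfd, hIA, hRHS]
    simp only [← Nat.add_assoc]
    rw [Finset.mul_sum, Finset.mul_sum, Finset.mul_sum, ← Finset.sum_sub_distrib,
      ← Finset.sum_sub_distrib]
    refine Finset.sum_congr rfl fun k _ => ?_
    have hs' : mom μ (k + m + 1) - β * mom μ (k + m)
        = γ * ∑ i ∈ Finset.range (k + m), mom ν i * mom μ (k + m - 1 - i) := by
      have hs := hshift (k + m + 1) (by omega)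
      simp only [Nat.add_sub_cancel] at hs
      rw [hs]
      have heq : ∑ i ∈ Finset.range (k+m), mom ν i * mom μ (k + m + 1 - 2 - i)
          = ∑ i ∈ Finset.range (k+m), mom ν i * mom μ (k + m - 1 - i) :=
        Finset.sum_congr rfl fun i _ => by congr 2 <;> omega
      rw [heq]; ring
    have hsh := sum_shuffle (mom ν) (mom μ) k m
    linear_combination (f.coeff k) * hs' + (γ * f.coeff k) * hsh
  -- orthogonality of Q against lower degrees
  have qorth : ∀ g : Polynomial ℝ, g.natDegree < n → ∫ x, Q.eval x * g.eval x ∂μ = 0 := by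
    intro g hg
    have hte : ∀ x : ℝ, Q.eval x * g.eval x
        = ∑ m ∈ Finset.range (g.natDegree + 1), g.coeff m * (Q.eval x * x ^ m) := by
      intro x
      rw [eval_eq_sum_range (p := g) x, Finset.mul_sum]
      exact Finset.sum_congr rfl fun m _ => by ring
    simp_rw [hte]
    rw [integral_finset_sum _ (fun m _ => (integrable_eval_mul_pow hcsμ Q m).const_mul _)]
    apply Finset.sum_eq_zero
    intro m hm
    simp only [Finset.mem_range] at hm
    rw [integral_const_mul, key m]
    have hz : ∑ i ∈ Finset.range m, mom μ i * w (m-1-i) = 0 := by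
      apply Finset.sum_eq_zero
      intro i hi
      simp only [Finset.mem_range] at hi
      rw [hw0 (m-1-i) (by omega), mul_zero]
    rw [hz]; ring
  have mom0 : mom μ 0 = 1 := by simp [mom]
  have hQn : ∫ x, Q.eval x * x ^ n ∂μ = γ * w (n-1) := by
    rw [key n]
    congr 1
    rw [Finset.sum_eq_single 0]
    · simp [mom0]
    · intro i hi hne
      simp only [Finset.mem_range] at hi
      rw [hw0 (n-1-i) (by omega), mul_zero]
    · intro hna
      exact absurd (Finset.mem_range.mpr (by omega)) hna
  -- degree facts
  have hXfm : ((X - C β) * f).Monic := (monic_X_sub_C β).mul hfm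
  have hXfd : ((X - C β) * f).natDegree = n := by
    rw [natDegree_mul (X_sub_C_ne_zero β) hfm.ne_zero, natDegree_X_sub_C, hfd]
    omega
  have hAd : A.natDegree < n := by
    have h1 : A.natDegree ≤ n - 1 := by
      rw [hAdef]
      apply Polynomial.natDegree_sum_le_of_forall_le
      intro k hk
      simp only [Finset.mem_range] at hk
      apply le_trans natDegree_mul_le
      simp only [natDegree_C, zero_add]
      apply Polynomial.natDegree_sum_le_of_forall_le
      intro i hi
      simp only [Finset.mem_range] at hi
      apply le_trans natDegree_mul_le
      simp only [natDegree_C, zero_add, natDegree_X_pow]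
      omega
    omega
  have hQc : Q.coeff n = 1 := by
    have h1 : ((X - C β) * f).coeff n = 1 := by
      have h := hXfm.coeff_natDegree
      rwa [hXfd] at h
    have h2 : A.coeff n = 0 := coeff_eq_zero_of_natDegree_lt hAd
    simp [hQdef, h1, h2]
  have hQd : Q.natDegree ≤ n := by
    apply le_trans (natDegree_sub_le _ _)
    simp only [sup_le_iff]
    refine ⟨le_of_eq hXfd, le_trans natDegree_mul_le ?_⟩
    simp only [natDegree_C, zero_add]
    omega
  have hr1 : (Pμ n - X ^ n).natDegree < n := by
    apply natDegree_lt_of_coeff ?_ ?_ hn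
    · apply le_trans (natDegree_sub_le _ _)
      simp [hPμ.2.1 n]
    · have h1 : (Pμ n).coeff n = 1 := by
        have h := (hPμ.1 n).coeff_natDegree
        rwa [hPμ.2.1 n] at h
      simp [h1]
  have hr2 : (X ^ n - Q).natDegree < n := by
    apply natDegree_lt_of_coeff ?_ ?_ hn
    · apply le_trans (natDegree_sub_le _ _)
      simp [hQd]
    · simp [hQc]
  -- final chain
  have e1 : ∫ x, ((Pμ n).eval x) ^ 2 ∂μ = ∫ x, (Pμ n).eval x * x ^ n ∂μ :=
    sq_eq_mul_pow hcsμ hPμ n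
  have e2 : ∫ x, (Pμ n).eval x * x ^ n ∂μ = ∫ x, (Pμ n).eval x * Q.eval x ∂μ := by
    have hsub : ∫ x, (Pμ n).eval x * (X ^ n - Q).eval x ∂μ = 0 :=
      orth_lower hcsμ hPμ n _ hr2
    have hpt : ∀ x : ℝ, (Pμ n).eval x * x ^ n
        = (Pμ n).eval x * Q.eval x + (Pμ n).eval x * ((X ^ n - Q).eval x) := by
      intro x
      simp only [eval_sub, eval_pow, eval_X]
      ring
    simp_rw [hpt]
    rw [integral_add (integrable_eval_mul hcsμ _ _) (integrable_eval_mul hcsμ _ _), hsub, add_zero]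
  have e3 : ∫ x, (Pμ n).eval x * Q.eval x ∂μ = γ * w (n-1) := by
    have hsub : ∫ x, Q.eval x * (Pμ n - X ^ n).eval x ∂μ = 0 := qorth _ hr1
    have hpt : ∀ x : ℝ, (Pμ n).eval x * Q.eval x
        = Q.eval x * x ^ n + Q.eval x * ((Pμ n - X ^ n).eval x) := by
      intro x
      simp only [eval_sub, eval_pow, eval_X]
      ring
    simp_rw [hpt]
    rw [integral_add (integrable_eval_mul_pow hcsμ _ _) (integrable_eval_mul hcsμ _ _), hsub,
      add_zero, hQn]
  have e4 : ∫ x, ((Pν (n-1)).eval x) ^ 2 ∂ν = w (n-1) := sq_eq_mul_pow hcsν hPν (n-1)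
  rw [e1, e2, e3, e4]

theorem stmt17 (μ ν : Measure ℝ) [IsProbabilityMeasure μ] [IsProbabilityMeasure ν]
    (hcsμ : CompactSupp μ) (hcsν : CompactSupp ν)
    (hinfμ : (msupport μ).Infinite) (hinfν : (msupport ν).Infinite)
    (β : ℝ) (γ : ℝ) (hγ : 0 < γ)
    (hshift : JacobiShift β γ (mom ν) (mom μ))
    (Pμ Pν : ℕ → Polynomial ℝ) (hPμ : IsMonicOPS μ Pμ) (hPν : IsMonicOPS ν Pν) :
    ∀ n : ℕ, 1 ≤ n →
      ∫ x, ((Pμ n).eval x) ^ 2 ∂μ = γ * ∫ x, ((Pν (n - 1)).eval x) ^ 2 ∂ν :=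
  stmt17' μ ν hcsμ hcsν β γ hγ hshift Pμ Pν hPμ hPν
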